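/- Let D be a field of characteristic 2 (more generally, let ε = -1 and the involution on D be the identity, so D is commutative). Then the only (-1)-hermitian cone on M_n(D) with the transpose involution is {0}. -/

import Mathlib

open Matrix

private lemma key_mul {D : Type*} [Field D] {n : ℕ} (i j k l : Fin n)
    (A : Matrix (Fin n) (Fin n) D) :
    Matrix.single i j (1:D) * A * Matrix.single k l 1 = Matrix.single i l (A j k) := by
  ext a b
  simp only [Matrix.mul_apply, Matrix.single, of_apply, ite_and, mul_ite, ite_mul,
    one_mul, mul_one, zero_mul, mul_zero, Finset.sum_ite_eq, Finset.sum_ite_eq',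
    Finset.mem_univ, if_true]
  split_ifs <;> simp

private lemma key_transpose {D : Type*} [Field D] {n : ℕ} (i j : Fin n) :
    (Matrix.single i j (1:D))ᵀ = Matrix.single j i 1 := by
  ext a b; simp [Matrix.single, and_comm]

private lemma key_neg {D : Type*} [Field D] {n : ℕ} (i j : Fin n) (c : D) :
    -Matrix.single i j c = Matrix.single i j (-c) := by
  have := Matrix.single_add (α := D) i j c (-c)
  simp only [add_neg_cancel, Matrix.single_zero] at this
  linear_combination (norm := module) this

/-- If `D` is a field (the case of a central division algebra on which the involution
restricts to the identity, so the involution on `Mₙ(D)` is the transpose) and `ε = -1`,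
then the only `(-1)`-hermitian cone on `Mₙ(D)` is `{0}`.  (In particular this covers
fields of characteristic 2.) -/
theorem stmt_4 {D : Type*} [Field D] (n : ℕ)
    (M : Set (Matrix (Fin n) (Fin n) D))
    (hherm : ∀ A ∈ M, -Aᵀ = A)
    (hadd : ∀ A ∈ M, ∀ B ∈ M, A + B ∈ M)
    (hcong : ∀ P : Matrix (Fin n) (Fin n) D, ∀ A ∈ M, P * A * Pᵀ ∈ M)
    (hzero : (0 : Matrix (Fin n) (Fin n) D) ∈ M)
    (hproper : M ∩ (-M) = {0}) :
    M = {0} := by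
  have hskew : ∀ A ∈ M, ∀ k l : Fin n, A l k = -(A k l) := by
    intro A hA k l
    have := congrFun (congrFun (hherm A hA) l) k
    simpa using this.symm
  have hmem0 : ∀ B ∈ M, -B ∈ M → B = 0 := by
    intro B hB hnB
    have : B ∈ M ∩ (-M) := ⟨hB, Set.mem_neg.2 (by simpa using hnB)⟩
    rw [hproper] at this
    simpa using this
  have hdiag : ∀ A ∈ M, ∀ k : Fin n, A k k = 0 := by
    intro A hA k
    have h1 : Matrix.single k k (A k k) ∈ M := by
      have := hcong (Matrix.single k k 1) A hA
      rwa [key_transpose, key_mul] at this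
    have hkk : -(A k k) = A k k := (hskew A hA k k).symm
    have h2 : -Matrix.single k k (A k k) ∈ M := by
      rwa [key_neg, hkk]
    have := congrFun (congrFun (hmem0 _ h1 h2) k) k
    simpa using this
  have hA0 : ∀ A ∈ M, A = 0 := by
    intro A hA
    ext k l
    rcases eq_or_ne k l with rfl | hne
    · simpa using hdiag A hA k
    · -- off-diagonal entry
      have hd := hdiag A hA
      have hs := hskew A hA k l
      set c := A k l with hc
      have expand : ∀ X Y : Matrix (Fin n) (Fin n) D,
          (X + Y) * A * (X + Y) = X * A * X + X * A * Y + (Y * A * X + Y * A * Y) := by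
        intro X Y; noncomm_ring
      have expand' : ∀ X Y : Matrix (Fin n) (Fin n) D,
          (X + Y) * A * (Y + X) = X * A * Y + X * A * X + (Y * A * Y + Y * A * X) := by
        intro X Y; noncomm_ring
      -- B = P A Pᵀ with P = E_kk + E_ll
      have hB : Matrix.single k l c + Matrix.single l k (-c) ∈ M := by
        have := hcong (Matrix.single k k 1 + Matrix.single l l 1) A hA
        rw [transpose_add, key_transpose, key_transpose, expand,
          key_mul, key_mul, key_mul, key_mul, hd k, hd l, Matrix.single_zero,
          Matrix.single_zero, hs] at this
        simpa using this
      -- C = Q A Qᵀ with Q = E_kl + E_lk equals -B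
      have hC : -(Matrix.single k l c + Matrix.single l k (-c)) ∈ M := by
        have := hcong (Matrix.single k l 1 + Matrix.single l k 1) A hA
        rw [transpose_add, key_transpose, key_transpose, expand',
          key_mul, key_mul, key_mul, key_mul, hd k, hd l, Matrix.single_zero,
          Matrix.single_zero, hs] at this
        rw [neg_add, key_neg, key_neg, neg_neg]
        simpa [add_comm] using this
      have := congrFun (congrFun (hmem0 _ hB hC) k) l
      simp only [Matrix.add_apply, Matrix.single_apply_same, Matrix.zero_apply] at this
      rw [Matrix.single_apply_of_ne l k (-c) k l (show ¬(l = k ∧ k = l) by tauto)] at this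
      simpa [hc] using this
  ext A
  simp only [Set.mem_singleton_iff]
  exact ⟨hA0 A, fun h => h ▸ hzero⟩
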